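/- Let 0 ≤ t < T, γ > 0, r > 0, σ_F > 0, μ_F ∈ ℝ, V̄ > 0, ψ > 0, and let z > 0 and f > 0 (the time-t values of the pricing kernel and of the fixed-term asset). Let G be a Gaussian random variable with mean 0 and variance T − t, and define Z_T := z · exp(−(r + γ²/2)(T − t) − γG) and F_T := f · h(t,T) · (Z_T/z)^(−σ_F/γ). Then the time-t replication value of the payoff (V̄ − ψ F_T)⁺ satisfies E[(Z_T/z) · max(V̄ − ψ F_T, 0)] = V̄ · z⁻¹ · ξ(T, t, z, 1, z·(ψ f h(t,T)/V̄)^(γ/σ_F), +∞) − ψ f h(t,T) · z^(σ_F/γ − 1) · ξ(T, t, z, 1 − σ_F/γ, z·(ψ f h(t,T)/V̄)^(γ/σ_F), +∞). -/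

import Mathlib

open MeasureTheory ProbabilityTheory

open scoped ENNReal NNReal Real

/-- Cumulative distribution function of the standard normal distribution. -/
noncomputable def Phi (x : ℝ) : ℝ := ((gaussianReal 0 1) (Set.Iic x)).toReal

/-- `Φ(d̄(x) + kγ√(s − t))`, where `d̄(x) = (ln(z/x) − (r + γ²/2)(s − t)) / (γ √(s − t))`
for `x ∈ (0, ∞)`, with the conventions `Φ(d̄(0) + u) = 1` and `Φ(d̄(∞) + u) = 0`. -/
noncomputable def PhiDbar (γ r s t z k : ℝ) (x : ℝ≥0∞) : ℝ :=
  if x = 0 then 1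
  else if x = ⊤ then 0
  else Phi ((Real.log (z / x.toReal) - (r + γ ^ 2 / 2) * (s - t)) / (γ * Real.sqrt (s - t))
      + k * γ * Real.sqrt (s - t))

/-- `ξ(s, t, z, k, a, b; γ, r)`. -/
noncomputable def xi (γ r s t z k : ℝ) (a b : ℝ≥0∞) : ℝ :=
  z ^ k * Real.exp (-k * (r + γ ^ 2 / 2) * (s - t) + k ^ 2 * γ ^ 2 / 2 * (s - t)) *
    (PhiDbar γ r s t z k a - PhiDbar γ r s t z k b) * (if a < b then 1 else 0)

/-- `h(t₁, t₂) = exp((μ_F − σ_F²/2 − σ_F r/γ − σ_F γ/2)(t₂ − t₁))`. -/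
noncomputable def hF (γ r μF σF t₁ t₂ : ℝ) : ℝ :=
  Real.exp ((μF - σF ^ 2 / 2 - σF * r / γ - σF * γ / 2) * (t₂ - t₁))



lemma pdf_mul_exp (τ : ℝ≥0) (hτ : τ ≠ 0) (β w : ℝ) :
    gaussianPDFReal 0 τ w * Real.exp (β * w)
      = Real.exp (β ^ 2 * τ / 2) * gaussianPDFReal (β * τ) τ w := by
  have hτ' : (τ : ℝ) ≠ 0 := by exact_mod_cast hτ
  simp only [gaussianPDFReal, sub_zero]
  rw [mul_assoc, ← Real.exp_add, mul_left_comm, ← Real.exp_add]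
  congr 2
  field_simp
  ring

lemma integrable_exp_gauss (τ : ℝ≥0) (hτ : τ ≠ 0) (β : ℝ) :
    Integrable (fun w => Real.exp (β * w)) (gaussianReal 0 τ) := by
  rw [gaussianReal_of_var_ne_zero _ hτ]
  have hd : gaussianPDF 0 τ = fun x => ((Real.toNNReal (gaussianPDFReal 0 τ x) : ℝ≥0) : ℝ≥0∞) := rfl
  rw [hd, integrable_withDensity_iff_integrable_coe_smul
    ((measurable_gaussianPDFReal 0 τ).real_toNNReal)]
  have : (fun x => (Real.toNNReal (gaussianPDFReal 0 τ x) : ℝ) • Real.exp (β * x))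
      = fun x => Real.exp (β ^ 2 * τ / 2) * gaussianPDFReal (β * τ) τ x := by
    funext x
    rw [smul_eq_mul, Real.coe_toNNReal _ (gaussianPDFReal_nonneg 0 τ x), pdf_mul_exp τ hτ]
  rw [this]
  exact (integrable_gaussianPDFReal _ _).const_mul _

lemma gauss_Iio (m : ℝ) (τ : ℝ≥0) (hτ : τ ≠ 0) (x : ℝ) :
    (gaussianReal m τ (Set.Iio x)).toReal = Phi ((x - m) / Real.sqrt τ) := by
  have hτpos : (0 : ℝ) < τ := lt_of_le_of_ne τ.2 (by exact_mod_cast hτ.symm)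
  have hs : (0 : ℝ) < Real.sqrt τ := Real.sqrt_pos.mpr hτpos
  have hvar : (⟨Real.sqrt τ ^ 2, sq_nonneg _⟩ : ℝ≥0) * 1 = τ := by
    ext; simp [Real.sq_sqrt τ.2]
  have hmap1 : (gaussianReal 0 1).map (fun y => Real.sqrt τ * y) = gaussianReal 0 τ := by
    rw [show (fun y => Real.sqrt τ * y) = (Real.sqrt τ * ·) from rfl,
      gaussianReal_map_const_mul, mul_zero]
    exact congrArg (gaussianReal 0) hvar
  have hmap2 : (gaussianReal 0 τ).map (· + m) = gaussianReal m τ := by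
    rw [gaussianReal_map_add_const, zero_add]
  have h1 : gaussianReal m τ (Set.Iio x) = gaussianReal 0 τ (Set.Iio (x - m)) := by
    rw [← hmap2, Measure.map_apply (measurable_add_const m) measurableSet_Iio]
    congr 1
    ext y; simp [lt_sub_iff_add_lt]
  have h2 : gaussianReal 0 τ (Set.Iio (x - m))
      = gaussianReal 0 1 (Set.Iio ((x - m) / Real.sqrt τ)) := by
    rw [← hmap1, Measure.map_apply (measurable_const_mul _) measurableSet_Iio]
    congr 1
    ext y
    simp only [Set.mem_preimage, Set.mem_Iio]
    rw [lt_div_iff₀ hs, mul_comm]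
  have h3 : gaussianReal 0 1 (Set.Iio ((x - m) / Real.sqrt τ))
      = gaussianReal 0 1 (Set.Iic ((x - m) / Real.sqrt τ)) := by
    exact measure_congr (MeasureTheory.Iio_ae_eq_Iic'
      (gaussianReal_absolutelyContinuous 0 one_ne_zero (measure_singleton _)))
  rw [h1, h2, h3, Phi]

lemma key_exp_integral (τ : ℝ≥0) (hτ : τ ≠ 0) (β w₀ : ℝ) :
    ∫ w in Set.Iio w₀, Real.exp (β * w) ∂(gaussianReal 0 τ)
      = Real.exp (β ^ 2 * τ / 2) * Phi ((w₀ - β * τ) / Real.sqrt τ) := by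
  rw [gaussianReal_of_var_ne_zero _ hτ]
  have hd : gaussianPDF 0 τ = fun x => ((Real.toNNReal (gaussianPDFReal 0 τ x) : ℝ≥0) : ℝ≥0∞) := rfl
  rw [hd, setIntegral_withDensity_eq_setIntegral_smul
    ((measurable_gaussianPDFReal 0 τ).real_toNNReal) _ measurableSet_Iio]
  have heq : ∀ x, (Real.toNNReal (gaussianPDFReal 0 τ x) : ℝ≥0) • Real.exp (β * x)
      = Real.exp (β ^ 2 * τ / 2) * gaussianPDFReal (β * τ) τ x := by
    intro x
    rw [NNReal.smul_def, smul_eq_mul, Real.coe_toNNReal _ (gaussianPDFReal_nonneg 0 τ x),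
      pdf_mul_exp τ hτ]
  rw [setIntegral_congr_fun measurableSet_Iio (fun x _ => heq x), integral_const_mul]
  congr 1
  rw [← gauss_Iio (β * τ) τ hτ w₀, gaussianReal_apply_eq_integral _ hτ,
    ENNReal.toReal_ofReal (setIntegral_nonneg measurableSet_Iio
      (fun x _ => gaussianPDFReal_nonneg _ _ _))]

theorem put_on_fixed_term_asset_replication_value_at_t
    (T t γ r σF μF V ψ z f : ℝ)
    (ht : 0 ≤ t) (htT : t < T) (hγ : 0 < γ) (hr : 0 < r) (hσF : 0 < σF)
    (hV : 0 < V) (hψ : 0 < ψ) (hz : 0 < z) (hf : 0 < f) :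
    (∫ w, Real.exp (-(r + γ ^ 2 / 2) * (T - t) - γ * w) *
        max (V - ψ * (f * hF γ r μF σF t T *
          (Real.exp (-(r + γ ^ 2 / 2) * (T - t) - γ * w)) ^ (-(σF / γ)))) 0
        ∂(gaussianReal 0 (Real.toNNReal (T - t))))
      = V * z⁻¹ * xi γ r T t z 1
            (ENNReal.ofReal (z * (ψ * f * hF γ r μF σF t T / V) ^ (γ / σF))) ⊤
        - ψ * f * hF γ r μF σF t T * z ^ (σF / γ - 1) * xi γ r T t z (1 - σF / γ)
            (ENNReal.ofReal (z * (ψ * f * hF γ r μF σF t T / V) ^ (γ / σF))) ⊤ := by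
  have hTt : (0 : ℝ) < T - t := sub_pos.mpr htT
  set τ : ℝ≥0 := (T - t).toNNReal with hτdef
  have hτc : (τ : ℝ) = T - t := Real.coe_toNNReal _ hTt.le
  have hτ : τ ≠ 0 := fun h => absurd (Real.toNNReal_eq_zero.mp h) (not_le.mpr hTt)
  have hh : 0 < hF γ r μF σF t T := Real.exp_pos _
  set A : ℝ := ψ * f * hF γ r μF σF t T with hA
  have hApos : 0 < A := by positivity
  set c : ℝ := (r + γ ^ 2 / 2) * (T - t) with hc
  set L : ℝ := Real.log (V / A) with hL
  set w₀ : ℝ := (L / (σF / γ) - c) / γ with hw₀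
  have hq : 0 < σF / γ := by positivity
  have hVA : 0 < V / A := by positivity
  -- the threshold iff
  have hiff : ∀ w : ℝ, w < w₀ ↔ σF / γ * (c + γ * w) < L := by
    intro w
    rw [hw₀, lt_div_iff₀' hγ, lt_sub_iff_add_lt', lt_div_iff₀' hq]
  -- pointwise rewrite of the integrand
  have hpoint : ∀ w : ℝ, Real.exp (-(r + γ ^ 2 / 2) * (T - t) - γ * w) *
      max (V - ψ * (f * hF γ r μF σF t T *
        (Real.exp (-(r + γ ^ 2 / 2) * (T - t) - γ * w)) ^ (-(σF / γ)))) 0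
      = Set.indicator (Set.Iio w₀)
          (fun w => V * Real.exp (-c) * Real.exp (-γ * w)
            - A * Real.exp ((σF / γ - 1) * c) * Real.exp ((σF - γ) * w)) w := by
    intro w
    have e1 : -(r + γ ^ 2 / 2) * (T - t) - γ * w = -c - γ * w := by rw [hc]; ring
    have e2 : Real.exp (-c - γ * w) ^ (-(σF / γ)) = Real.exp (σF / γ * (c + γ * w)) := by
      rw [← Real.exp_mul]; congr 1; ring
    have e3 : ψ * (f * hF γ r μF σF t T * Real.exp (σF / γ * (c + γ * w)))
        = A * Real.exp (σF / γ * (c + γ * w)) := by rw [hA]; ring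
    rw [e1, e2, e3]
    by_cases hw : w < w₀
    · rw [Set.indicator_of_mem (Set.mem_Iio.mpr hw)]
      have hlt : A * Real.exp (σF / γ * (c + γ * w)) < V := by
        have h1 : Real.exp (σF / γ * (c + γ * w)) < V / A :=
          (Real.lt_log_iff_exp_lt hVA).mp ((hiff w).mp hw)
        calc A * Real.exp (σF / γ * (c + γ * w)) < A * (V / A) :=
              mul_lt_mul_of_pos_left h1 hApos
          _ = V := by field_simp
      rw [max_eq_left (by linarith)]
      have e4 : -c - γ * w + σF / γ * (c + γ * w) = (σF / γ - 1) * c + (σF - γ) * w := by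
        field_simp; ring
      calc Real.exp (-c - γ * w) * (V - A * Real.exp (σF / γ * (c + γ * w)))
          = V * Real.exp (-c - γ * w)
            - A * Real.exp (-c - γ * w + σF / γ * (c + γ * w)) := by
            rw [Real.exp_add]; ring
        _ = _ := by
            rw [e4, Real.exp_add, show -c - γ * w = -c + -γ * w by ring, Real.exp_add]; ring
    · rw [Set.indicator_of_notMem (by simpa using hw)]
      have hge : V / A ≤ Real.exp (σF / γ * (c + γ * w)) := by
        rw [← Real.exp_log hVA]
        exact Real.exp_le_exp.mpr (not_lt.mp ((hiff w).not.mp hw))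
      have : V ≤ A * Real.exp (σF / γ * (c + γ * w)) := by
        rw [← div_le_iff₀' hApos]; exact hge
      rw [max_eq_right (by linarith), mul_zero]
  -- compute the integral
  rw [show (∫ w, Real.exp (-(r + γ ^ 2 / 2) * (T - t) - γ * w) *
      max (V - ψ * (f * hF γ r μF σF t T *
        (Real.exp (-(r + γ ^ 2 / 2) * (T - t) - γ * w)) ^ (-(σF / γ)))) 0
      ∂(gaussianReal 0 τ))
      = ∫ w, Set.indicator (Set.Iio w₀)
          (fun w => V * Real.exp (-c) * Real.exp (-γ * w)
            - A * Real.exp ((σF / γ - 1) * c) * Real.exp ((σF - γ) * w)) w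
        ∂(gaussianReal 0 τ) from integral_congr_ae (ae_of_all _ hpoint)]
  rw [integral_indicator measurableSet_Iio]
  have i1 : Integrable (fun w => V * Real.exp (-c) * Real.exp (-γ * w))
      ((gaussianReal 0 τ).restrict (Set.Iio w₀)) :=
    ((integrable_exp_gauss τ hτ (-γ)).const_mul _).restrict
  have i2 : Integrable (fun w => A * Real.exp ((σF / γ - 1) * c) * Real.exp ((σF - γ) * w))
      ((gaussianReal 0 τ).restrict (Set.Iio w₀)) :=
    ((integrable_exp_gauss τ hτ (σF - γ)).const_mul _).restrict
  rw [integral_sub i1 i2, integral_const_mul, integral_const_mul,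
    key_exp_integral τ hτ (-γ) w₀, key_exp_integral τ hτ (σF - γ) w₀, hτc]
  -- now handle the right-hand side
  set S : ℝ := Real.sqrt (T - t) with hS
  have hSpos : 0 < S := Real.sqrt_pos.mpr hTt
  have hS2 : S ^ 2 = T - t := Real.sq_sqrt hTt.le
  have haval : 0 < z * (A / V) ^ (γ / σF) := by positivity
  have hzq : (0:ℝ) < z ^ (σF / γ) := Real.rpow_pos_of_pos hz _
  have hne0 : ENNReal.ofReal (z * (A / V) ^ (γ / σF)) ≠ 0 :=
    fun h => absurd (ENNReal.ofReal_eq_zero.mp h) (not_le.mpr haval)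
  have hnetop : ENNReal.ofReal (z * (A / V) ^ (γ / σF)) ≠ ⊤ := ENNReal.ofReal_ne_top
  have hlttop : ENNReal.ofReal (z * (A / V) ^ (γ / σF)) < ⊤ := ENNReal.ofReal_lt_top
  simp only [xi, PhiDbar, hne0, hnetop, hlttop, ENNReal.toReal_ofReal haval.le,
    ENNReal.top_ne_zero, if_false, if_true, ite_true, ite_false, ne_eq,
    not_false_eq_true, if_pos, if_neg]
  have hAV : 0 < A / V := by positivity
  have hu : (0:ℝ) < (A / V) ^ (γ / σF) := by positivity
  have hlog : Real.log (z / (z * (A / V) ^ (γ / σF))) = L / (σF / γ) := by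
    rw [show z / (z * (A / V) ^ (γ / σF)) = ((A / V) ^ (γ / σF))⁻¹ from
        div_mul_cancel_left₀ hz.ne' _,
      Real.log_inv, Real.log_rpow hAV,
      show Real.log (A / V) = -L from by rw [hL, ← Real.log_inv, inv_div]]
    field_simp
  rw [← hS, hlog]
  have harg1 : (w₀ - -γ * (T - t)) / S
      = (L / (σF / γ) - (r + γ ^ 2 / 2) * (T - t)) / (γ * S) + 1 * γ * S := by
    rw [hw₀, hc, ← hS2]
    field_simp
    ring
  have harg2 : (w₀ - (σF - γ) * (T - t)) / S
      = (L / (σF / γ) - (r + γ ^ 2 / 2) * (T - t)) / (γ * S) + (1 - σF / γ) * γ * S := by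
    rw [hw₀, hc, ← hS2]
    field_simp
    ring
  rw [harg1, harg2]
  have hcoef1 : rexp (-c) * rexp ((-γ) ^ 2 * (T - t) / 2)
      = rexp (-1 * (r + γ ^ 2 / 2) * (T - t) + 1 ^ 2 * γ ^ 2 / 2 * (T - t)) := by
    rw [← Real.exp_add]
    congr 1
    rw [hc]; ring
  have hcoef2 : rexp ((σF / γ - 1) * c) * rexp ((σF - γ) ^ 2 * (T - t) / 2)
      = rexp (-(1 - σF / γ) * (r + γ ^ 2 / 2) * (T - t) + (1 - σF / γ) ^ 2 * γ ^ 2 / 2 * (T - t)) := by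
    rw [← Real.exp_add]
    congr 1
    rw [hc]; field_simp; ring
  rw [Real.rpow_one, ← hcoef1, ← hcoef2, Real.rpow_sub hz, Real.rpow_sub hz, Real.rpow_one]
  field_simp
  ring
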